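/- For all words u, v over a finite ordered alphabet A and all n ∈ ℕ: u ⪯_n v if and only if for every FO+ formula φ of quantifier rank at most n, u ⊨ φ implies v ⊨ φ. -/

import Mathlib

/-- Syntax of positive first-order logic on words. -/
inductive FOp (A : Type) where
  | atom (a : A) (x : ℕ)
  | le (x y : ℕ)
  | lt (x y : ℕ)
  | and (φ ψ : FOp A)
  | or (φ ψ : FOp A)
  | ex (x : ℕ) (φ : FOp A)
  | all (x : ℕ) (φ : FOp A)

/-- Semantics of `FOp` formulas on words. -/
def FOp.Sat {A : Type} [PartialOrder A] (u : List A) (α : ℕ → ℕ) : FOp A → Prop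
  | atom a x => ∃ b, u[α x]? = some b ∧ a ≤ b
  | le x y => α x ≤ α y
  | lt x y => α x < α y
  | and φ ψ => FOp.Sat u α φ ∧ FOp.Sat u α ψ
  | or φ ψ => FOp.Sat u α φ ∨ FOp.Sat u α ψ
  | ex x φ => ∃ i, i < u.length ∧ FOp.Sat u (Function.update α x i) φ
  | all x φ => ∀ i, i < u.length → FOp.Sat u (Function.update α x i) φ

/-- Quantifier rank. -/
def FOp.qr {A : Type} : FOp A → ℕ
  | atom _ _ => 0
  | le _ _ => 0
  | lt _ _ => 0
  | and φ ψ => max φ.qr ψ.qr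
  | or φ ψ => max φ.qr ψ.qr
  | ex _ φ => φ.qr + 1
  | all _ φ => φ.qr + 1

/-- Free variables. -/
def FOp.fv {A : Type} : FOp A → Finset ℕ
  | atom _ x => {x}
  | le x y => {x, y}
  | lt x y => {x, y}
  | and φ ψ => φ.fv ∪ ψ.fv
  | or φ ψ => φ.fv ∪ ψ.fv
  | ex x φ => φ.fv.erase x
  | all x φ => φ.fv.erase x

/-- A language is FO⁺-definable if it is the set of words satisfying some
FO⁺ sentence. -/
def FOpDefinable {A : Type} [PartialOrder A] (L : Set (List A)) : Prop :=
  ∃ φ : FOp A, φ.fv = ∅ ∧ L = {u | FOp.Sat u (fun _ => 0) φ}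
/-- A position of the EF⁺-game on `(u, v)` given by the list `ts` of pairs of
token positions is valid if corresponding labels satisfy `u[i] ≤ v[j]` and the
orderings of token positions agree. -/
def ValidPos {A : Type} [PartialOrder A] (u v : List A) (ts : List (ℕ × ℕ)) : Prop :=
  (∀ p ∈ ts, ∃ a b, u[p.1]? = some a ∧ v[p.2]? = some b ∧ a ≤ b) ∧
  (∀ p ∈ ts, ∀ q ∈ ts, (p.1 ≤ q.1 ↔ p.2 ≤ q.2))

/-- Duplicator has a winning strategy in the `n` remaining rounds of the
EF⁺-game on `(u, v)` from the position `ts`. -/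
def DWin {A : Type} [PartialOrder A] (u v : List A) : ℕ → List (ℕ × ℕ) → Prop
  | 0, ts => ValidPos u v ts
  | n + 1, ts => ValidPos u v ts ∧
      (∀ i, i < u.length → ∃ j, j < v.length ∧ DWin u v n ((i, j) :: ts)) ∧
      (∀ j, j < v.length → ∃ i, i < u.length ∧ DWin u v n ((i, j) :: ts))

/-- `u ⪯ₙ v` : Duplicator has a winning strategy in the `n`-round EF⁺-game. -/
def EFpre {A : Type} [PartialOrder A] (n : ℕ) (u v : List A) : Prop :=
  DWin u v n []


namespace EFproofAux

variable {A : Type} [PartialOrder A]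

/-! ### Basic game lemmas -/

lemma ValidPos_mono {u v : List A} {ts ts' : List (ℕ × ℕ)}
    (h : ∀ p ∈ ts, p ∈ ts') (hv : ValidPos u v ts') : ValidPos u v ts :=
  ⟨fun p hp => hv.1 p (h p hp), fun p hp q hq => hv.2 p (h p hp) q (h q hq)⟩

lemma DWin_valid {u v : List A} : ∀ {n : ℕ} {ts : List (ℕ × ℕ)},
    DWin u v n ts → ValidPos u v ts
  | 0, _, h => h
  | _ + 1, _, h => h.1

lemma DWin_congr {u v : List A} : ∀ (n : ℕ) {ts ts' : List (ℕ × ℕ)},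
    (∀ p, p ∈ ts ↔ p ∈ ts') → DWin u v n ts → DWin u v n ts'
  | 0, ts, ts', h, hw => ValidPos_mono (fun p hp => (h p).2 hp) hw
  | n + 1, ts, ts', h, hw => by
      refine ⟨ValidPos_mono (fun p hp => (h p).2 hp) hw.1, fun i hi => ?_, fun j hj => ?_⟩
      · obtain ⟨j, hj, hw'⟩ := hw.2.1 i hi
        exact ⟨j, hj, DWin_congr n (fun p => by simp [h p]) hw'⟩
      · obtain ⟨i, hi, hw'⟩ := hw.2.2 j hj
        exact ⟨i, hi, DWin_congr n (fun p => by simp [h p]) hw'⟩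

/-! ### Forward direction -/

lemma sat_of_DWin {u v : List A} (φ : FOp A) :
    ∀ (n : ℕ), φ.qr ≤ n → ∀ (ts : List (ℕ × ℕ)) (α β : ℕ → ℕ),
      DWin u v n ts → (∀ x ∈ φ.fv, (α x, β x) ∈ ts) →
      FOp.Sat u α φ → FOp.Sat v β φ := by
  induction φ with
  | atom a x =>
    intro n _ ts α β hw hfv hs
    obtain ⟨b, hb, hab⟩ := hs
    obtain ⟨a', b', ha', hb', h'⟩ := (DWin_valid hw).1 _ (hfv x (by simp [FOp.fv]))
    refine ⟨b', hb', ?_⟩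
    rw [ha'] at hb; injection hb with hb; subst hb
    exact le_trans hab h'
  | le x y =>
    intro n _ ts α β hw hfv hs
    exact ((DWin_valid hw).2 _ (hfv x (by simp [FOp.fv])) _ (hfv y (by simp [FOp.fv]))).1 hs
  | lt x y =>
    intro n _ ts α β hw hfv hs
    have h2 := ((DWin_valid hw).2 _ (hfv y (by simp [FOp.fv])) _ (hfv x (by simp [FOp.fv])))
    exact Nat.lt_of_not_le (fun h => Nat.not_le_of_lt hs (h2.2 h))
  | and φ ψ ihφ ihψ =>
    intro n hqr ts α β hw hfv hs
    exact ⟨ihφ n (le_trans (le_max_left _ _) hqr) ts α β hw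
        (fun x hx => hfv x (by simp [FOp.fv, hx])) hs.1,
      ihψ n (le_trans (le_max_right _ _) hqr) ts α β hw
        (fun x hx => hfv x (by simp [FOp.fv, hx])) hs.2⟩
  | or φ ψ ihφ ihψ =>
    intro n hqr ts α β hw hfv hs
    rcases hs with hs | hs
    · exact Or.inl (ihφ n (le_trans (le_max_left _ _) hqr) ts α β hw
        (fun x hx => hfv x (by simp [FOp.fv, hx])) hs)
    · exact Or.inr (ihψ n (le_trans (le_max_right _ _) hqr) ts α β hw
        (fun x hx => hfv x (by simp [FOp.fv, hx])) hs)
  | ex x φ ih =>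
    intro n hqr ts α β hw hfv hs
    cases n with
    | zero => simp [FOp.qr] at hqr
    | succ m =>
      obtain ⟨i, hi, hs⟩ := hs
      obtain ⟨j, hj, hw'⟩ := hw.2.1 i hi
      refine ⟨j, hj, ih m (by simpa [FOp.qr] using hqr) _ _ _ hw' ?_ hs⟩
      intro y hy
      by_cases hyx : y = x
      · subst hyx; simp [Function.update_self]
      · simp only [Function.update_of_ne hyx]
        exact List.mem_cons_of_mem _ (hfv y (Finset.mem_erase.mpr ⟨hyx, hy⟩))
  | all x φ ih =>
    intro n hqr ts α β hw hfv hs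
    cases n with
    | zero => simp [FOp.qr] at hqr
    | succ m =>
      intro j hj
      obtain ⟨i, hi, hw'⟩ := hw.2.2 j hj
      refine ih m (by simpa [FOp.qr] using hqr) _ _ _ hw' ?_ (hs i hi)
      intro y hy
      by_cases hyx : y = x
      · subst hyx; simp [Function.update_self]
      · simp only [Function.update_of_ne hyx]
        exact List.mem_cons_of_mem _ (hfv y (Finset.mem_erase.mpr ⟨hyx, hy⟩))


/-! ### Characteristic formulas -/

def bigAnd (φ₀ : FOp A) (l : List (FOp A)) : FOp A := l.foldr .and φ₀
def bigOr (φ₀ : FOp A) (l : List (FOp A)) : FOp A := l.foldr .or φ₀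

lemma sat_bigAnd {w : List A} {γ : ℕ → ℕ} {φ₀ : FOp A} {l : List (FOp A)} :
    FOp.Sat w γ (bigAnd φ₀ l) ↔ FOp.Sat w γ φ₀ ∧ ∀ ψ ∈ l, FOp.Sat w γ ψ := by
  induction l with
  | nil => simp [bigAnd]
  | cons ψ l ih =>
    simp only [bigAnd, List.foldr_cons, FOp.Sat, List.mem_cons]
    rw [show List.foldr FOp.and φ₀ l = bigAnd φ₀ l from rfl, ih]
    constructor
    · rintro ⟨h1, h2, h3⟩
      exact ⟨h2, fun ψ' h => by rcases h with rfl | h; exact h1; exact h3 ψ' h⟩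
    · rintro ⟨h1, h2⟩
      exact ⟨h2 ψ (Or.inl rfl), h1, fun ψ' h => h2 ψ' (Or.inr h)⟩

lemma sat_bigOr {w : List A} {γ : ℕ → ℕ} {φ₀ : FOp A} {l : List (FOp A)} :
    FOp.Sat w γ (bigOr φ₀ l) ↔ FOp.Sat w γ φ₀ ∨ ∃ ψ ∈ l, FOp.Sat w γ ψ := by
  induction l with
  | nil => simp [bigOr]
  | cons ψ l ih =>
    simp only [bigOr, List.foldr_cons, FOp.Sat, List.mem_cons]
    rw [show List.foldr FOp.or φ₀ l = bigOr φ₀ l from rfl, ih]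
    constructor
    · rintro (h | h | ⟨ψ', h1, h2⟩)
      · exact Or.inr ⟨ψ, Or.inl rfl, h⟩
      · exact Or.inl h
      · exact Or.inr ⟨ψ', Or.inr h1, h2⟩
    · rintro (h | ⟨ψ', (rfl | h1), h2⟩)
      · exact Or.inr (Or.inl h)
      · exact Or.inl h2
      · exact Or.inr (Or.inr ⟨ψ', h1, h2⟩)

lemma qr_bigAnd {m : ℕ} {φ₀ : FOp A} {l : List (FOp A)} (h₀ : φ₀.qr ≤ m)
    (h : ∀ ψ ∈ l, FOp.qr ψ ≤ m) : (bigAnd φ₀ l).qr ≤ m := by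
  induction l with
  | nil => exact h₀
  | cons ψ l ih =>
    simp only [bigAnd, List.foldr_cons, FOp.qr, max_le_iff]
    exact ⟨h ψ (by simp), ih (fun ψ hψ => h ψ (by simp [hψ]))⟩

lemma qr_bigOr {m : ℕ} {φ₀ : FOp A} {l : List (FOp A)} (h₀ : φ₀.qr ≤ m)
    (h : ∀ ψ ∈ l, FOp.qr ψ ≤ m) : (bigOr φ₀ l).qr ≤ m := by
  induction l with
  | nil => exact h₀
  | cons ψ l ih =>
    simp only [bigOr, List.foldr_cons, FOp.qr, max_le_iff]
    exact ⟨h ψ (by simp), ih (fun ψ hψ => h ψ (by simp [hψ]))⟩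

lemma fv_bigAnd {s : Finset ℕ} {φ₀ : FOp A} {l : List (FOp A)} (h₀ : φ₀.fv ⊆ s)
    (h : ∀ ψ ∈ l, FOp.fv ψ ⊆ s) : (bigAnd φ₀ l).fv ⊆ s := by
  induction l with
  | nil => exact h₀
  | cons ψ l ih =>
    simp only [bigAnd, List.foldr_cons, FOp.fv, Finset.union_subset_iff]
    exact ⟨h ψ (by simp), ih (fun ψ hψ => h ψ (by simp [hψ]))⟩

lemma fv_bigOr {s : Finset ℕ} {φ₀ : FOp A} {l : List (FOp A)} (h₀ : φ₀.fv ⊆ s)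
    (h : ∀ ψ ∈ l, FOp.fv ψ ⊆ s) : (bigOr φ₀ l).fv ⊆ s := by
  induction l with
  | nil => exact h₀
  | cons ψ l ih =>
    simp only [bigOr, List.foldr_cons, FOp.fv, Finset.union_subset_iff]
    exact ⟨h ψ (by simp), ih (fun ψ hψ => h ψ (by simp [hψ]))⟩

def atomF (u : List A) (α : ℕ → ℕ) (x : ℕ) : FOp A :=
  match u[α x]? with
  | some a => .atom a x
  | none => .lt x x

lemma atomF_eq {u : List A} {α : ℕ → ℕ} {x : ℕ} {a : A} (h : u[α x]? = some a) :
    atomF u α x = .atom a x := by simp [atomF, h]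

lemma qr_atomF {u : List A} {α : ℕ → ℕ} {x : ℕ} : (atomF u α x).qr = 0 := by
  unfold atomF; cases u[α x]? <;> simp [FOp.qr]

lemma fv_atomF {u : List A} {α : ℕ → ℕ} {x : ℕ} : (atomF u α x).fv ⊆ {x} := by
  unfold atomF; cases u[α x]? <;> simp [FOp.fv]

def ordF (α : ℕ → ℕ) (x y : ℕ) : FOp A :=
  if α x < α y then .lt x y
  else if α y < α x then .lt y x
  else .and (.le x y) (.le y x)

lemma qr_ordF {α : ℕ → ℕ} {x y : ℕ} : (ordF (A := A) α x y).qr = 0 := by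
  unfold ordF; split_ifs <;> simp [FOp.qr]

lemma fv_ordF {α : ℕ → ℕ} {x y : ℕ} : (ordF (A := A) α x y).fv ⊆ {x, y} := by
  unfold ordF; split_ifs <;> simp [FOp.fv, Finset.insert_subset_iff, Finset.pair_comm]

lemma sat_ordF_self {u : List A} {α : ℕ → ℕ} {x y : ℕ} :
    FOp.Sat u α (ordF α x y) := by
  unfold ordF; split_ifs with h1 h2 <;> simp [FOp.Sat, *] <;> omega

lemma sat_ordF_iff {v : List A} {α β : ℕ → ℕ} {x y : ℕ}
    (h : FOp.Sat v β (ordF α x y)) : (α x ≤ α y ↔ β x ≤ β y) := by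
  unfold ordF at h; split_ifs at h with h1 h2 <;> simp [FOp.Sat] at h <;> omega

def base (u : List A) (k : ℕ) (α : ℕ → ℕ) : FOp A :=
  bigAnd (atomF u α 0)
    ((List.range k).map (atomF u α) ++
      (List.range k).flatMap (fun x => (List.range k).map (fun y => ordF α x y)))

def chi (u : List A) : ℕ → ℕ → (ℕ → ℕ) → FOp A
  | 0, k, α => base u k α
  | n + 1, k, α =>
      .and (bigAnd (.all k (.le k k))
              ((List.range u.length).map
                (fun i => .ex k (chi u n (k + 1) (Function.update α k i)))))
           (.all k (bigOr (.lt k k)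
              ((List.range u.length).map
                (fun i => chi u n (k + 1) (Function.update α k i)))))

lemma qr_chi {u : List A} : ∀ (n k : ℕ) (α : ℕ → ℕ), (chi u n k α).qr ≤ n
  | 0, k, α => by
    refine qr_bigAnd (le_of_eq qr_atomF) ?_
    intro ψ hψ
    simp only [List.mem_append, List.mem_map, List.mem_flatMap] at hψ
    rcases hψ with ⟨x, _, rfl⟩ | ⟨x, _, y, _, rfl⟩
    · exact le_of_eq qr_atomF
    · exact le_of_eq qr_ordF
  | n + 1, k, α => by
    show (FOp.and _ _).qr ≤ n + 1
    simp only [FOp.qr, max_le_iff]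
    constructor
    · refine qr_bigAnd ?_ ?_
      · simp only [FOp.qr]; omega
      · rintro ψ hψ
        obtain ⟨i, _, rfl⟩ := List.mem_map.mp hψ
        simpa [FOp.qr] using qr_chi n (k + 1) (Function.update α k i)
    · show (bigOr _ _).qr + 1 ≤ n + 1
      refine Nat.succ_le_succ (qr_bigOr ?_ ?_)
      · simp only [FOp.qr]; omega
      · rintro ψ hψ
        obtain ⟨i, _, rfl⟩ := List.mem_map.mp hψ
        exact qr_chi n (k + 1) _

lemma fv_chi {u : List A} : ∀ (n k : ℕ) (α : ℕ → ℕ), 0 < k ∨ 0 < n →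
    (chi u n k α).fv ⊆ Finset.range k
  | 0, k, α, hk => by
    have hk : 0 < k := by omega
    refine fv_bigAnd (le_trans fv_atomF ?_) ?_
    · simp [Finset.singleton_subset_iff, hk]
    intro ψ hψ
    simp only [List.mem_append, List.mem_map, List.mem_flatMap, List.mem_range] at hψ
    rcases hψ with ⟨x, hx, rfl⟩ | ⟨x, hx, y, hy, rfl⟩
    · exact le_trans fv_atomF (by simp [Finset.singleton_subset_iff, hx])
    · exact le_trans fv_ordF
        (by simp [Finset.insert_subset_iff, Finset.singleton_subset_iff, hx, hy])
  | n + 1, k, α, _ => by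
    simp only [chi, FOp.fv, Finset.union_subset_iff]
    constructor
    · refine fv_bigAnd (by simp [FOp.fv]) ?_
      rintro ψ hψ
      obtain ⟨i, _, rfl⟩ := List.mem_map.mp hψ
      simp only [FOp.fv]
      intro y hy
      obtain ⟨hyk, hy⟩ := Finset.mem_erase.mp hy
      have := fv_chi n (k + 1) (Function.update α k i) (Or.inl (Nat.succ_pos k)) hy
      simp only [Finset.mem_range] at this ⊢
      omega
    · intro y hy
      obtain ⟨hyk, hy⟩ := Finset.mem_erase.mp hy
      have : y ∈ Finset.range (k + 1) := by
        refine fv_bigOr (s := Finset.range (k + 1)) (by simp [FOp.fv]) ?_ hy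
        rintro ψ hψ
        obtain ⟨i, _, rfl⟩ := List.mem_map.mp hψ
        exact fv_chi n (k + 1) (Function.update α k i) (Or.inl (Nat.succ_pos k))
      simp only [Finset.mem_range] at this ⊢
      omega

lemma sat_chi_self {u : List A} : ∀ (n k : ℕ) (α : ℕ → ℕ), 0 < k ∨ 0 < n →
    (∀ x, x < k → α x < u.length) → FOp.Sat u α (chi u n k α)
  | 0, k, α, hk, hinv => by
    have hk : 0 < k := by omega
    have hatom : ∀ x, x < k → FOp.Sat u α (atomF u α x) := by
      intro x hx
      have h := List.getElem?_eq_getElem (hinv x hx)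
      rw [atomF_eq h]
      exact ⟨_, h, le_refl _⟩
    refine sat_bigAnd.mpr ⟨hatom 0 hk, ?_⟩
    intro ψ hψ
    simp only [List.mem_append, List.mem_map, List.mem_flatMap, List.mem_range] at hψ
    rcases hψ with ⟨x, hx, rfl⟩ | ⟨x, hx, y, hy, rfl⟩
    · exact hatom x hx
    · exact sat_ordF_self
  | n + 1, k, α, _, hinv => by
    have hinv' : ∀ i, i < u.length → ∀ x, x < k + 1 →
        Function.update α k i x < u.length := by
      intro i hi x hx
      by_cases hxk : x = k
      · subst hxk; simpa using hi
      · rw [Function.update_of_ne hxk]; exact hinv x (by omega)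
    constructor
    · refine sat_bigAnd.mpr ⟨?_, ?_⟩
      · intro i _; simp [FOp.Sat]
      · rintro ψ hψ
        obtain ⟨i, hi, rfl⟩ := List.mem_map.mp hψ
        simp only [List.mem_range] at hi
        exact ⟨i, hi, sat_chi_self n (k + 1) _ (Or.inl (Nat.succ_pos k)) (hinv' i hi)⟩
    · intro i hi
      refine sat_bigOr.mpr (Or.inr ⟨chi u n (k + 1) (Function.update α k i), ?_, ?_⟩)
      · exact List.mem_map.mpr ⟨i, List.mem_range.mpr hi, rfl⟩
      · exact sat_chi_self n (k + 1) _ (Or.inl (Nat.succ_pos k)) (hinv' i hi)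

def pairs (k : ℕ) (α β : ℕ → ℕ) : List (ℕ × ℕ) :=
  (List.range k).map (fun x => (α x, β x))

lemma pairs_succ_mem {k i j : ℕ} {α β : ℕ → ℕ} (p : ℕ × ℕ) :
    p ∈ pairs (k + 1) (Function.update α k i) (Function.update β k j) ↔
      p ∈ (i, j) :: pairs k α β := by
  simp only [pairs, List.mem_map, List.mem_range, List.mem_cons]
  constructor
  · rintro ⟨x, hx, rfl⟩
    rcases Nat.lt_succ_iff_lt_or_eq.mp hx with h | rfl
    · exact Or.inr ⟨x, h, by simp [Function.update_of_ne (Nat.ne_of_lt h)]⟩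
    · exact Or.inl (by simp)
  · rintro (rfl | ⟨x, hx, rfl⟩)
    · exact ⟨k, k.lt_succ_self, by simp⟩
    · exact ⟨x, Nat.lt_succ_of_lt hx, by simp [Function.update_of_ne (Nat.ne_of_lt hx)]⟩

lemma chi_spec {u v : List A} : ∀ (n k : ℕ) (α β : ℕ → ℕ), 0 < k ∨ 0 < n →
    (∀ x, x < k → α x < u.length) →
    FOp.Sat v β (chi u n k α) → DWin u v n (pairs k α β)
  | 0, k, α, β, hk, hinv, hs => by
    have hs := sat_bigAnd.mp hs
    constructor
    · rintro p hp
      obtain ⟨x, hx, rfl⟩ := List.mem_map.mp hp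
      rw [List.mem_range] at hx
      have hget := List.getElem?_eq_getElem (hinv x hx)
      have hsat : FOp.Sat v β (atomF u α x) := by
        refine hs.2 _ (List.mem_append.mpr (Or.inl ?_))
        exact List.mem_map.mpr ⟨x, List.mem_range.mpr hx, rfl⟩
      rw [atomF_eq hget] at hsat
      obtain ⟨b, hb, hab⟩ := hsat
      exact ⟨_, b, hget, hb, hab⟩
    · rintro p hp q hq
      obtain ⟨x, hx, rfl⟩ := List.mem_map.mp hp
      obtain ⟨y, hy, rfl⟩ := List.mem_map.mp hq
      have hsat : FOp.Sat v β (ordF α x y) := by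
        refine hs.2 _ (List.mem_append.mpr (Or.inr ?_))
        exact List.mem_flatMap.mpr ⟨x, hx, List.mem_map.mpr ⟨y, hy, rfl⟩⟩
      exact sat_ordF_iff hsat
  | n + 1, k, α, β, _, hinv, hs => by
    obtain ⟨hs1, hs2⟩ := hs
    have hs1 := (sat_bigAnd.mp hs1).2
    have hinvu : ∀ i, i < u.length → ∀ x, x < k + 1 →
        Function.update α k i x < u.length := by
      intro i hi x hx
      by_cases hxk : x = k
      · subst hxk; simpa using hi
      · rw [Function.update_of_ne hxk]; exact hinv x (by omega)
    have hspoilu : ∀ i, i < u.length →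
        ∃ j, j < v.length ∧ DWin u v n ((i, j) :: pairs k α β) := by
      intro i hi
      have hsat : FOp.Sat v β (.ex k (chi u n (k + 1) (Function.update α k i))) :=
        hs1 _ (List.mem_map.mpr ⟨i, List.mem_range.mpr hi, rfl⟩)
      obtain ⟨j, hj, hsat⟩ := hsat
      refine ⟨j, hj, DWin_congr n (fun p => pairs_succ_mem p) ?_⟩
      exact chi_spec n (k + 1) _ _ (Or.inl (Nat.succ_pos k)) (hinvu i hi) hsat
    refine ⟨?_, hspoilu, ?_⟩
    · -- validity of the current position
      rcases Nat.eq_zero_or_pos u.length with hu | hu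
      · rcases Nat.eq_zero_or_pos k with rfl | hk
        · exact ⟨by simp [pairs], by simp [pairs]⟩
        · exact absurd (hinv 0 hk) (by omega)
      · obtain ⟨j, _, hw⟩ := hspoilu 0 hu
        exact ValidPos_mono (fun p hp => List.mem_cons_of_mem _ hp) (DWin_valid hw)
    · -- Spoiler plays in v
      intro j hj
      have hsat := hs2 j hj
      rcases sat_bigOr.mp hsat with hbad | ⟨ψ, hψ, hsat⟩
      · simp [FOp.Sat] at hbad
      · obtain ⟨i, hi, rfl⟩ := List.mem_map.mp hψ
        rw [List.mem_range] at hi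
        refine ⟨i, hi, DWin_congr n (fun p => pairs_succ_mem p) ?_⟩
        exact chi_spec n (k + 1) _ _ (Or.inl (Nat.succ_pos k)) (hinvu i hi) hsat

end EFproofAux


/-- `u ⪯ₙ v` iff every FO⁺ sentence of quantifier rank at most
`n` satisfied by `u` is satisfied by `v`. -/
theorem EFpre_iff_FOp {A : Type} [Fintype A] [PartialOrder A]
    (u v : List A) (n : ℕ) :
    EFpre n u v ↔
      ∀ φ : FOp A, φ.fv = ∅ → φ.qr ≤ n →
        FOp.Sat u (fun _ => 0) φ → FOp.Sat v (fun _ => 0) φ := by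
  constructor
  · intro hwin φ hfv hqr hs
    exact EFproofAux.sat_of_DWin φ n hqr [] _ _ hwin (by simp [hfv]) hs
  · intro H
    cases n with
    | zero =>
      show ValidPos u v []
      exact ⟨fun p hp => absurd hp List.not_mem_nil,
        fun p hp => absurd hp List.not_mem_nil⟩
    | succ m =>
      have hsub := EFproofAux.fv_chi (u := u) (m + 1) 0 (fun _ => 0) (Or.inr (Nat.succ_pos m))
      rw [Finset.range_zero] at hsub
      have hfv : (EFproofAux.chi u (m + 1) 0 (fun _ => 0)).fv = ∅ :=
        Finset.subset_empty.mp hsub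
      have hs := EFproofAux.sat_chi_self (u := u) (m + 1) 0 (fun _ => 0)
        (Or.inr (Nat.succ_pos m)) (by omega)
      have hsv := H _ hfv (EFproofAux.qr_chi (m + 1) 0 (fun _ => 0)) hs
      have hw := EFproofAux.chi_spec (u := u) (v := v) (m + 1) 0
        (fun _ => 0) (fun _ => 0) (Or.inr (Nat.succ_pos m)) (by omega) hsv
      simpa [EFproofAux.pairs, EFpre] using hw
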